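/- Let Q be a finite acyclic quiver, X an exceptional representation of Q (i.e. End(X) = k and Ext¹(X,X) = 0), and a a natural number. If W is a subrepresentation of X^a with dimension vector equal to that of X, then W is isomorphic to X. -/

import Mathlib

/- If X is an exceptional representation (End X = k, Ext¹(X,X) = 0) of a finite acyclic
   quiver and W ≤ X^a is a subrepresentation with the same dimension vector as X, then
   W ≅ X. -/

/-- A representation of the quiver with vertices `V`, arrows `A`, source and target
maps `s`, `t`. -/
structure QRep (k : Type) [Field k] (V A : Type) (s t : A → V) where
  space : V → Type
  [addCommGroup : ∀ v, AddCommGroup (space v)]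
  [module : ∀ v, Module k (space v)]
  map : ∀ a : A, space (s a) →ₗ[k] space (t a)

attribute [instance] QRep.addCommGroup QRep.module

/-- The quiver has no (directed) cycles. -/
def NoCycle {V A : Type} (s t : A → V) : Prop :=
  ∀ (m : ℕ) (c : Fin (m + 1) → A),
    (∀ i : Fin m, t (c i.castSucc) = s (c i.succ)) → t (c (Fin.last m)) ≠ s (c 0)

/-- `f` is a morphism of representations `X → Y`. -/
def IsQHom (k : Type) [Field k] {V A : Type} {s t : A → V} (X Y : QRep k V A s t)
    (f : ∀ v, X.space v →ₗ[k] Y.space v) : Prop :=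
  ∀ a : A, (f (t a)).comp (X.map a) = (Y.map a).comp (f (s a))

/-- The direct sum of `n` copies of a representation. -/
def QRep.pow (k : Type) [Field k] {V A : Type} {s t : A → V} (X : QRep k V A s t)
    (n : ℕ) : QRep k V A s t where
  space v := Fin n → X.space v
  addCommGroup := fun _ => inferInstance
  module := fun _ => inferInstance
  map a := LinearMap.pi fun j => (X.map a).comp (LinearMap.proj j)

/-- The "commutator" linear map whose kernel is `Hom(X, W)` and whose cokernel is
`Ext¹(X, W)`. -/
def commMap (k : Type) [Field k] {V A : Type} {s t : A → V}
    (M : V → Type) [∀ v, AddCommGroup (M v)] [∀ v, Module k (M v)]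
    (Mmap : ∀ a : A, M (s a) →ₗ[k] M (t a))
    (N : V → Type) [∀ v, AddCommGroup (N v)] [∀ v, Module k (N v)]
    (Nmap : ∀ a : A, N (s a) →ₗ[k] N (t a)) :
    (∀ v, M v →ₗ[k] N v) →ₗ[k] (∀ a : A, M (s a) →ₗ[k] N (t a)) where
  toFun f := fun a => ((f (t a)).comp (Mmap a)) - ((Nmap a).comp (f (s a)))
  map_add' f g := by
    funext a; ext x
    simp [LinearMap.add_comp, LinearMap.comp_add]
    abel
  map_smul' c f := by
    funext a; ext x
    simp [LinearMap.smul_comp, LinearMap.comp_smul, smul_sub]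

set_option maxHeartbeats 1000000 in
theorem stmt4 (k : Type) [Field k] {V A : Type} [Finite V] [Finite A]
    (s t : A → V) (hacyclic : NoCycle s t)
    (X : QRep k V A s t) [∀ v, FiniteDimensional k (X.space v)]
    -- X is exceptional: End(X) = k ...
    (hbrick : ∀ f, IsQHom k X X f → ∃ c : k, ∀ v, f v = c • LinearMap.id)
    -- ... and Ext¹(X,X) = 0, i.e. the standard map computing Ext¹ is surjective
    (hext : ∀ h : ∀ a : A, X.space (s a) →ₗ[k] X.space (t a),
      ∃ f : ∀ v, X.space v →ₗ[k] X.space v,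
        ∀ a, h a = ((f (t a)).comp (X.map a)) - ((X.map a).comp (f (s a))))
    (n : ℕ)
    -- W is a subrepresentation of X^n with the same dimension vector as X
    (W : ∀ v, Submodule k (Fin n → X.space v))
    (hW : ∀ a : A, ∀ x ∈ W (s a), (QRep.pow k X n).map a x ∈ W (t a))
    (hdim : ∀ v, Module.finrank k (W v) = Module.finrank k (X.space v)) :
    -- W ≅ X
    ∃ e : ∀ v, W v ≃ₗ[k] X.space v,
      ∀ (a : A) (x : W (s a)),
        e (t a) ⟨(QRep.pow k X n).map a x.1, hW a x.1 x.2⟩ = X.map a (e (s a) x) := by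
  classical
  cases nonempty_fintype V
  cases nonempty_fintype A
  by_cases htriv : ∀ v, Subsingleton (X.space v)
  · -- trivial case: X = 0, hence W = 0
    have hWsub : ∀ v, Subsingleton (W v) := by
      intro v
      have h0 : Module.finrank k (X.space v) = 0 := by
        haveI := htriv v
        exact Module.finrank_zero_of_subsingleton
      have : Module.finrank k (W v) = 0 := by rw [hdim v, h0]
      exact Module.finrank_zero_iff.mp this
    refine ⟨fun v => @LinearEquiv.ofSubsingleton k _ _ _ _ _ _ _ (hWsub v) (htriv v),
      fun a x => Subsingleton.elim _ _⟩
  · -- main case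
    push_neg at htriv
    obtain ⟨v₀, hv₀⟩ := htriv
    -- the restricted maps on W
    set Wmap : ∀ a : A, W (s a) →ₗ[k] W (t a) :=
      fun a => ((QRep.pow k X n).map a).restrict (hW a) with hWmap
    set ΦX := commMap k X.space X.map X.space X.map with hΦX
    set ΦW := commMap k X.space X.map (fun v => W v) Wmap with hΦW
    -- surjectivity of ΦX
    have hsurj : Function.Surjective ΦX := by
      intro h
      obtain ⟨f, hf⟩ := hext h
      exact ⟨f, funext fun a => (hf a).symm⟩
    -- finrank computations
    have hd1 : Module.finrank k (∀ v, X.space v →ₗ[k] X.space v)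
        = Module.finrank k (∀ v, X.space v →ₗ[k] W v) := by
      rw [Module.finrank_pi_fintype, Module.finrank_pi_fintype]
      refine Finset.sum_congr rfl fun v _ => ?_
      rw [Module.finrank_linearMap, Module.finrank_linearMap, hdim v]
    have hd2 : Module.finrank k (∀ a : A, X.space (s a) →ₗ[k] X.space (t a))
        = Module.finrank k (∀ a : A, X.space (s a) →ₗ[k] W (t a)) := by
      rw [Module.finrank_pi_fintype, Module.finrank_pi_fintype]
      refine Finset.sum_congr rfl fun a _ => ?_
      rw [Module.finrank_linearMap, Module.finrank_linearMap, hdim (t a)]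
    -- rank-nullity for both
    have hrnX := LinearMap.finrank_range_add_finrank_ker ΦX
    have hrnW := LinearMap.finrank_range_add_finrank_ker ΦW
    have hrX : Module.finrank k (LinearMap.range ΦX)
        = Module.finrank k (∀ a : A, X.space (s a) →ₗ[k] X.space (t a)) := by
      rw [LinearMap.range_eq_top.mpr hsurj, finrank_top]
    have hrW : Module.finrank k (LinearMap.range ΦW)
        ≤ Module.finrank k (∀ a : A, X.space (s a) →ₗ[k] W (t a)) :=
      Submodule.finrank_le _
    -- ker ΦX is nontrivial (contains the identity)
    have hid : (fun v => (LinearMap.id : X.space v →ₗ[k] X.space v)) ∈ LinearMap.ker ΦX := by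
      rw [LinearMap.mem_ker]
      funext a; ext x; simp [hΦX, commMap]
    have hidne : (fun v => (LinearMap.id : X.space v →ₗ[k] X.space v))
        ≠ (0 : ∀ v, X.space v →ₗ[k] X.space v) := by
      intro h
      obtain ⟨x, y, hxy⟩ := hv₀
      have := congrFun h v₀
      apply hxy
      have hx : x = (LinearMap.id : X.space v₀ →ₗ[k] X.space v₀) x := rfl
      have hy : y = (LinearMap.id : X.space v₀ →ₗ[k] X.space v₀) y := rfl
      rw [hx, hy, this]; simp
    have hkerXpos : 0 < Module.finrank k (LinearMap.ker ΦX) := by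
      have : Nontrivial (LinearMap.ker ΦX) := by
        refine ⟨⟨_, hid⟩, 0, ?_⟩
        intro h
        exact hidne (congrArg Subtype.val h)
      exact Module.finrank_pos
    -- hence ker ΦW is nontrivial
    have hkerWpos : 0 < Module.finrank k (LinearMap.ker ΦW) := by omega
    have : Nontrivial (LinearMap.ker ΦW) := Module.finrank_pos_iff.mp hkerWpos
    obtain ⟨⟨f, hfker⟩, hfne⟩ := exists_ne (0 : LinearMap.ker ΦW)
    have hfne' : f ≠ 0 := by
      intro h; exact hfne (Subtype.ext h)
    -- f is a morphism X → W
    have hfhom : ∀ a : A, (f (t a)).comp (X.map a) = (Wmap a).comp (f (s a)) := by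
      intro a
      have := congrFun (LinearMap.mem_ker.mp hfker) a
      exact sub_eq_zero.mp (by simpa [hΦW, commMap] using this)
    -- compose with inclusion and projections to get endomorphisms of X
    have hproj : ∀ j : Fin n, ∃ c : k, ∀ v,
        (LinearMap.proj j).comp ((W v).subtype.comp (f v)) = c • LinearMap.id := by
      intro j
      apply hbrick
      intro a
      ext x
      simp only [LinearMap.comp_apply, LinearMap.proj_apply, Submodule.subtype_apply]
      have h2 : ((f (t a)) ((X.map a) x) : Fin n → X.space (t a))
          = (((Wmap a) ((f (s a)) x) : W (t a)) : Fin n → X.space (t a)) :=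
        congrArg Subtype.val (LinearMap.ext_iff.mp (hfhom a) x)
      calc ((f (t a) (X.map a x) : W (t a)) : Fin n → X.space (t a)) j
          = (((Wmap a) (f (s a) x) : W (t a)) : Fin n → X.space (t a)) j := by rw [h2]
        _ = X.map a (((f (s a) x : W (s a)) : Fin n → X.space (s a)) j) := by
            simp [hWmap, LinearMap.restrict_apply, QRep.pow]
            rfl
    choose c hc using hproj
    -- f is nonzero somewhere, giving a nonzero scalar
    have : ∃ v x, f v x ≠ 0 := by
      by_contra h
      push_neg at h
      exact hfne' (funext fun v => LinearMap.ext fun x => h v x)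
    obtain ⟨v₁, x₁, hx₁⟩ := this
    have : ∃ j : Fin n, (f v₁ x₁ : Fin n → X.space v₁) j ≠ 0 := by
      by_contra h
      push_neg at h
      apply hx₁
      exact Subtype.ext (funext h)
    obtain ⟨j, hj⟩ := this
    have hcj : c j ≠ 0 := by
      intro h
      apply hj
      have := congrFun (congrArg DFunLike.coe (hc j v₁)) x₁
      simp only [LinearMap.comp_apply, Submodule.subtype_apply, LinearMap.proj_apply,
        LinearMap.smul_apply, LinearMap.id_apply] at this
      rw [this, h, zero_smul]
    -- each f v is injective
    have hkey : ∀ v (x : X.space v), f v x = 0 → x = 0 := by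
      intro v x hx0
      have h3 := congrFun (congrArg DFunLike.coe (hc j v)) x
      simp only [LinearMap.comp_apply, Submodule.subtype_apply, LinearMap.proj_apply,
        LinearMap.smul_apply, LinearMap.id_apply] at h3
      rw [hx0] at h3
      have : c j • x = 0 := by rw [← h3]; rfl
      rcases smul_eq_zero.mp this with h | h
      · exact absurd h hcj
      · exact h
    have hinj : ∀ v, Function.Injective (f v) := by
      intro v x y hxy
      have h4 : f v (x - y) = 0 := by rw [map_sub, hxy, sub_self]
      have := hkey v (x - y) h4
      exact sub_eq_zero.mp this
    -- the linear equivalences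
    let eqv : ∀ v, X.space v ≃ₗ[k] W v := fun v =>
      LinearMap.linearEquivOfInjective (f v) (hinj v) ((hdim v).symm)
    refine ⟨fun v => (eqv v).symm, ?_⟩
    intro a x
    rw [LinearEquiv.symm_apply_eq]
    have heq : ∀ v y, eqv v y = f v y := fun v y =>
      LinearMap.linearEquivOfInjective_apply (hinj v) ((hdim v).symm) y
    have hy : f (s a) ((eqv (s a)).symm x) = x := by
      have := (eqv (s a)).apply_symm_apply x
      rwa [heq] at this
    have h5 := LinearMap.ext_iff.mp (hfhom a) ((eqv (s a)).symm x)
    simp only [LinearMap.comp_apply] at h5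
    rw [heq, h5, hy]
    apply Subtype.ext
    simp only [hWmap]
    rfl
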